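/- Let G be a δ-hyperbolic group with finite generating set and H a K-quasiconvex subgroup. Then the number of double cosets H g H whose shortest representative has length at most 2K + 2δ is finite, and consequently there is a finite bound N such that any collection of elements g₁, ..., g_n in pairwise distinct double cosets of H with H ∩ g_i⁻¹ H g_i infinite for all i satisfies n ≤ N. (Quasiconvex subgroups of hyperbolic groups have finite weak width.) -/
import Mathlib


/-!
STATEMENT 13: Let `G` be a δ-hyperbolic group with finite generating set and
`H` a `K`-quasiconvex subgroup.  The number of double cosets `H g H` having a
representative of length at most `2K + 2δ` is finite, and consequently there is
a bound `N` such that any collection of elements in pairwise distinct double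
cosets of `H`, each of whose conjugates of `H` meets `H` in an infinite set,
has at most `N` elements (quasiconvex subgroups of hyperbolic groups have
finite weak width).
-/

section WordMetric

variable {G : Type*} [Group G]

/-- The word length of `g` with respect to a generating set `S`: the least length
of a word in the generators (elements of `S`) whose product is `g`. -/
noncomputable def wlen (S : Set G) (g : G) : ℕ :=
  sInf {n : ℕ | ∃ l : List G, (∀ s ∈ l, s ∈ S) ∧ l.length = n ∧ l.prod = g}

/-- The word metric on the Cayley graph of `G` with respect to `S`. -/
noncomputable def wdist (S : Set G) (g h : G) : ℕ := wlen S (g⁻¹ * h)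

/-- `l` is a geodesic word: its letters lie in `S` and it has minimal length among
all words in `S` with the same product. -/
def IsGeodesicWord (S : Set G) (l : List G) : Prop :=
  (∀ s ∈ l, s ∈ S) ∧ l.length = wlen S l.prod

/-- The vertices visited by the path starting at `g` and reading the word `l`. -/
def pathVertices (g : G) (l : List G) : Set G :=
  {v | ∃ i ≤ l.length, v = g * (l.take i).prod}

/-- `H` is `K`-quasiconvex with respect to `S`: every vertex of a geodesic in the
Cayley graph joining two elements of `H` lies within distance `K` of `H`. -/
def IsQuasiconvex (S : Set G) (H : Subgroup G) (K : ℝ) : Prop :=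
  ∀ g : G, g ∈ H → ∀ l : List G, IsGeodesicWord S l → g * l.prod ∈ H →
    ∀ v ∈ pathVertices g l, ∃ h ∈ H, (wdist S v h : ℝ) ≤ K

/-- The Cayley graph of `G` with respect to `S` is `δ`-hyperbolic: every geodesic
triangle is `δ`-thin, i.e. each side lies in the `δ`-neighborhood of the union of
the other two sides. -/
def IsHyperbolic (S : Set G) (δ : ℝ) : Prop :=
  ∀ (a b c : G) (l₁ l₂ l₃ : List G),
    IsGeodesicWord S l₁ → IsGeodesicWord S l₂ → IsGeodesicWord S l₃ →
    a * l₁.prod = b → b * l₂.prod = c → a * l₃.prod = c →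
    ∀ v ∈ pathVertices a l₃,
      ∃ u ∈ pathVertices a l₁ ∪ pathVertices b l₂, (wdist S u v : ℝ) ≤ δ

end WordMetric

namespace WWAux

variable {G : Type*} [Group G]

lemma word_exists (S : Set G) (hSsymm : ∀ s ∈ S, s⁻¹ ∈ S)
    (hSgen : Subgroup.closure S = ⊤) (g : G) :
    ∃ l : List G, (∀ s ∈ l, s ∈ S) ∧ l.prod = g := by
  have hg : g ∈ Subgroup.closure S := by rw [hSgen]; trivial
  induction hg using Subgroup.closure_induction with
  | mem s hs => exact ⟨[s], by simp [hs]⟩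
  | one => exact ⟨[], by simp⟩
  | mul a b _ _ iha ihb =>
      obtain ⟨la, hla, hpa⟩ := iha
      obtain ⟨lb, hlb, hpb⟩ := ihb
      refine ⟨la ++ lb, ?_, by simp [hpa, hpb]⟩
      intro s hs; rcases List.mem_append.1 hs with h | h
      exacts [hla s h, hlb s h]
  | inv a _ iha =>
      obtain ⟨la, hla, hpa⟩ := iha
      refine ⟨(la.map fun x => x⁻¹).reverse, ?_, ?_⟩
      · intro s hs
        simp only [List.mem_reverse, List.mem_map] at hs
        obtain ⟨t, ht, rfl⟩ := hs
        exact hSsymm t (hla t ht)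
      · rw [← List.prod_inv_reverse, hpa]

lemma wlen_le (S : Set G) {l : List G} (hl : ∀ s ∈ l, s ∈ S) :
    wlen S l.prod ≤ l.length :=
  Nat.sInf_le ⟨l, hl, rfl, rfl⟩

lemma wlen_spec (S : Set G) (hSsymm : ∀ s ∈ S, s⁻¹ ∈ S)
    (hSgen : Subgroup.closure S = ⊤) (g : G) :
    ∃ l : List G, (∀ s ∈ l, s ∈ S) ∧ l.length = wlen S g ∧ l.prod = g := by
  have hne : {n : ℕ | ∃ l : List G, (∀ s ∈ l, s ∈ S) ∧ l.length = n ∧ l.prod = g}.Nonempty := by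
    obtain ⟨l, hl, hp⟩ := word_exists S hSsymm hSgen g
    exact ⟨l.length, l, hl, rfl, hp⟩
  exact Nat.sInf_mem hne

lemma geodesic_exists (S : Set G) (hSsymm : ∀ s ∈ S, s⁻¹ ∈ S)
    (hSgen : Subgroup.closure S = ⊤) (g : G) :
    ∃ l : List G, IsGeodesicWord S l ∧ l.prod = g := by
  obtain ⟨l, hl, hlen, hp⟩ := wlen_spec S hSsymm hSgen g
  exact ⟨l, ⟨hl, by rw [hp]; exact hlen⟩, hp⟩

lemma wlen_mul_le (S : Set G) (hSsymm : ∀ s ∈ S, s⁻¹ ∈ S)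
    (hSgen : Subgroup.closure S = ⊤) (a b : G) :
    wlen S (a * b) ≤ wlen S a + wlen S b := by
  obtain ⟨la, hla, hlena, hpa⟩ := wlen_spec S hSsymm hSgen a
  obtain ⟨lb, hlb, hlenb, hpb⟩ := wlen_spec S hSsymm hSgen b
  have h : ∀ s ∈ la ++ lb, s ∈ S := by
    intro s hs; rcases List.mem_append.1 hs with h | h
    exacts [hla s h, hlb s h]
  have := wlen_le S h
  simpa [hpa, hpb, hlena, hlenb] using this

lemma wlen_inv (S : Set G) (hSsymm : ∀ s ∈ S, s⁻¹ ∈ S)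
    (hSgen : Subgroup.closure S = ⊤) (g : G) :
    wlen S g⁻¹ = wlen S g := by
  have key : ∀ x : G, wlen S x⁻¹ ≤ wlen S x := by
    intro x
    obtain ⟨l, hl, hlen, hp⟩ := wlen_spec S hSsymm hSgen x
    have hmem : ∀ s ∈ (l.map fun y => y⁻¹).reverse, s ∈ S := by
      intro s hs
      simp only [List.mem_reverse, List.mem_map] at hs
      obtain ⟨t, ht, rfl⟩ := hs
      exact hSsymm t (hl t ht)
    have := wlen_le S hmem
    rw [← List.prod_inv_reverse, hp] at this
    simpa [hlen] using this
  exact le_antisymm (by simpa using key g) (by simpa using key g⁻¹)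

lemma wdist_symm (S : Set G) (hSsymm : ∀ s ∈ S, s⁻¹ ∈ S)
    (hSgen : Subgroup.closure S = ⊤) (a b : G) :
    wdist S a b = wdist S b a := by
  unfold wdist
  rw [← wlen_inv S hSsymm hSgen (b⁻¹ * a)]
  congr 1; group

lemma wdist_triangle (S : Set G) (hSsymm : ∀ s ∈ S, s⁻¹ ∈ S)
    (hSgen : Subgroup.closure S = ⊤) (a b c : G) :
    wdist S a c ≤ wdist S a b + wdist S b c := by
  unfold wdist
  have := wlen_mul_le S hSsymm hSgen (a⁻¹ * b) (b⁻¹ * c)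
  simpa [mul_assoc] using this

lemma take_prod_wlen (S : Set G) (hSsymm : ∀ s ∈ S, s⁻¹ ∈ S)
    (hSgen : Subgroup.closure S = ⊤) {l : List G} (hl : IsGeodesicWord S l)
    {i : ℕ} (hi : i ≤ l.length) :
    wlen S (l.take i).prod = i ∧ wlen S ((l.take i).prod⁻¹ * l.prod) = l.length - i := by
  obtain ⟨hmem, hlen⟩ := hl
  have hsplit : (l.take i).prod * (l.drop i).prod = l.prod := by
    rw [← List.prod_append, List.take_append_drop]
  have h1 : wlen S (l.take i).prod ≤ i := by
    have := wlen_le S (l := l.take i) (fun s hs => hmem s (List.mem_of_mem_take hs))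
    simpa [List.length_take, Nat.min_eq_left hi] using this
  have h2 : wlen S (l.drop i).prod ≤ l.length - i := by
    have := wlen_le S (l := l.drop i) (fun s hs => hmem s (List.mem_of_mem_drop hs))
    simpa [List.length_drop] using this
  have h3 : l.length ≤ wlen S (l.take i).prod + wlen S (l.drop i).prod := by
    calc l.length = wlen S l.prod := hlen
    _ ≤ _ := by rw [← hsplit]; exact wlen_mul_le S hSsymm hSgen _ _
  have e1 : wlen S (l.take i).prod = i := by omega
  have hdrop : (l.take i).prod⁻¹ * l.prod = (l.drop i).prod := by
    rw [← hsplit]; group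
  have e2 : wlen S ((l.take i).prod⁻¹ * l.prod) = l.length - i := by
    rw [hdrop]; omega
  exact ⟨e1, e2⟩

lemma ball_finite (S : Set G) (hSfin : S.Finite) (hSsymm : ∀ s ∈ S, s⁻¹ ∈ S)
    (hSgen : Subgroup.closure S = ⊤) (n : ℕ) :
    {g : G | wlen S g ≤ n}.Finite := by
  haveI : Finite ↥S := hSfin.to_subtype
  have hL : {l : List ↥S | l.length ≤ n}.Finite := List.finite_length_le ↥S n
  have himg : {g : G | wlen S g ≤ n} ⊆
      (fun l : List ↥S => (l.map Subtype.val).prod) '' {l : List ↥S | l.length ≤ n} := by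
    intro g hg
    obtain ⟨l, hl, hlen, hp⟩ := wlen_spec S hSsymm hSgen g
    refine ⟨l.attach.map fun x => (⟨x.1, hl x.1 x.2⟩ : ↥S), ?_, ?_⟩
    · simpa [List.length_map, List.length_attach] using hlen.le.trans hg
    · simp only [List.map_map]
      have : (l.attach.map fun x : {x // x ∈ l} => x.1) = l := List.attach_map_subtype_val l
      calc ((l.attach.map fun x => ((⟨x.1, hl x.1 x.2⟩ : ↥S) : G))).prod
          = (l.attach.map fun x : {x // x ∈ l} => x.1).prod := by rfl
        _ = g := by rw [this, hp]
  exact (hL.image _).subset himg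

lemma infinite_unbounded (S : Set G) (hSfin : S.Finite) (hSsymm : ∀ s ∈ S, s⁻¹ ∈ S)
    (hSgen : Subgroup.closure S = ⊤) {T : Set G} (hT : T.Infinite) (n : ℕ) :
    ∃ x ∈ T, n ≤ wlen S x := by
  by_contra hcon
  push_neg at hcon
  exact hT ((ball_finite S hSfin hSsymm hSgen n).subset fun x hx => (hcon x hx).le)

end WWAux

namespace WWAux

variable {G : Type*} [Group G]

/-- Key geometric lemma: if `H ∩ g⁻¹Hg` is infinite then the double coset `HgH`
contains an element of length at most `2K + 2δ`. -/
lemma key_lemma (S : Set G) (hSfin : S.Finite) (hSsymm : ∀ s ∈ S, s⁻¹ ∈ S)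
    (hSgen : Subgroup.closure S = ⊤)
    (δ K : ℝ) (hδ : 0 ≤ δ) (hK : 0 ≤ K)
    (hhyp : IsHyperbolic S δ) (H : Subgroup G) (hqc : IsQuasiconvex S H K) (g : G)
    (hinf : ((H : Set G) ∩ ((fun y => g⁻¹ * y * g) '' (H : Set G))).Infinite) :
    ∃ x : G, (∃ a ∈ H, ∃ b ∈ H, x = a * g * b) ∧ (wlen S x : ℝ) ≤ 2 * K + 2 * δ := by
  set i : ℕ := ⌊(wlen S g : ℝ) + 2 * δ⌋₊ + 1 with hi_def
  have hi_gt : (wlen S g : ℝ) + 2 * δ < i := by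
    have := Nat.lt_floor_add_one ((wlen S g : ℝ) + 2 * δ)
    push_cast [hi_def]; push_cast at this; linarith
  -- choose a long element h of the intersection
  obtain ⟨h, hhmem, hhlen⟩ := infinite_unbounded S hSfin hSsymm hSgen hinf (2 * i)
  obtain ⟨hH, h', hh'H, hh'eq⟩ := hhmem
  -- h = g⁻¹ h' g, so h' * g = g * h
  have hcomm : h' * g = g * h := by
    have : g⁻¹ * h' * g = h := hh'eq
    calc h' * g = g * (g⁻¹ * h' * g) := by group
      _ = g * h := by rw [this]
  -- geodesic words
  obtain ⟨lh, lh_geo, lh_prod⟩ := geodesic_exists S hSsymm hSgen h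
  obtain ⟨lgi, lgi_geo, lgi_prod⟩ := geodesic_exists S hSsymm hSgen g⁻¹
  obtain ⟨lgh, lgh_geo, lgh_prod⟩ := geodesic_exists S hSsymm hSgen (g * h)
  obtain ⟨lh', lh'_geo, lh'_prod⟩ := geodesic_exists S hSsymm hSgen h'
  obtain ⟨lg, lg_geo, lg_prod⟩ := geodesic_exists S hSsymm hSgen g
  have lh_len : lh.length = wlen S h := by rw [lh_geo.2, lh_prod]
  have hi_le : i ≤ lh.length := by omega
  set m : G := (lh.take i).prod with hm_def
  set p : G := g * m with hp_def
  have hp_mem : p ∈ pathVertices g lh := ⟨i, hi_le, rfl⟩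
  -- distances from p to the corners
  obtain ⟨hm_len, hm_suffix⟩ := take_prod_wlen S hSsymm hSgen lh_geo hi_le
  have hd_gp : wdist S g p = i := by
    unfold wdist; rw [hp_def]; rw [show g⁻¹ * (g * m) = m by group]; exact hm_len
  have hd_pgh : wdist S p (g * h) = lh.length - i := by
    unfold wdist
    rw [show p⁻¹ * (g * h) = m⁻¹ * lh.prod by rw [hp_def, lh_prod]; group]
    exact hm_suffix
  have hd_pgh_big : (wlen S g : ℝ) + 2 * δ < (wdist S p (g * h) : ℝ) := by
    rw [hd_pgh]
    have : i ≤ lh.length - i := by omega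
    calc (wlen S g : ℝ) + 2 * δ < i := hi_gt
      _ ≤ ((lh.length - i : ℕ) : ℝ) := by exact_mod_cast this
  -- triangle 1 : vertices g, 1, g*h ; sides lgi (g → 1), lgh (1 → g*h), lh (g → g*h)
  obtain ⟨u, hu_mem, hu_d⟩ :=
    hhyp g 1 (g * h) lgi lgh lh lgi_geo lgh_geo lh_geo
      (by rw [lgi_prod]; group) (by rw [lgh_prod]; group) (by rw [lh_prod]) p hp_mem
  rcases hu_mem with hu | hu
  · -- u on [g, 1] : contradiction
    exfalso
    obtain ⟨j, hj, rfl⟩ := hu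
    have hd_gu : (wdist S g (g * (lgi.take j).prod) : ℝ) ≤ wlen S g := by
      have h1 : wdist S g (g * (lgi.take j).prod) ≤ j := by
        unfold wdist
        rw [show g⁻¹ * (g * (lgi.take j).prod) = (lgi.take j).prod by group]
        exact (take_prod_wlen S hSsymm hSgen lgi_geo hj).1.le
      have h2 : j ≤ wlen S g := by
        rw [← wlen_inv S hSsymm hSgen g, ← lgi_prod, ← lgi_geo.2]; exact hj
      exact_mod_cast h1.trans h2
    have htri : wdist S g p ≤ wdist S g (g * (lgi.take j).prod) +
        wdist S (g * (lgi.take j).prod) p := wdist_triangle S hSsymm hSgen _ _ _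
    have : (wdist S g p : ℝ) ≤ wlen S g + δ := by
      have := (Nat.cast_le (α := ℝ)).2 htri
      push_cast at this
      linarith [hu_d]
    rw [hd_gp] at this
    linarith
  · -- u on [1, g*h]
    -- triangle 2 : vertices 1, h', g*h ; sides lh' (1 → h'), lg (h' → g*h), lgh (1 → g*h)
    obtain ⟨w, hw_mem, hw_d⟩ :=
      hhyp 1 h' (g * h) lh' lg lgh lh'_geo lg_geo lgh_geo
        (by rw [lh'_prod]; group) (by rw [lg_prod]; exact hcomm)
        (by rw [lgh_prod]; group) u hu
    rcases hw_mem with hw | hw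
    · -- w on [1, h'] : the good case
      obtain ⟨h₀, hh₀H, hh₀d⟩ := hqc 1 (one_mem H) lh' lh'_geo
        (by rw [lh'_prod]; simpa using hh'H) w (by simpa using hw)
      obtain ⟨h₁, hh₁H, hh₁d⟩ := hqc 1 (one_mem H) lh lh_geo
        (by rw [lh_prod]; simpa using hH) m ⟨i, hi_le, by simp [hm_def]⟩
      -- d(p, h₀) ≤ K + 2δ
      have hd_ph₀ : (wdist S p h₀ : ℝ) ≤ K + 2 * δ := by
        have t1 : wdist S p h₀ ≤ wdist S p u + wdist S u h₀ :=
          wdist_triangle S hSsymm hSgen _ _ _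
        have t2 : wdist S u h₀ ≤ wdist S u w + wdist S w h₀ :=
          wdist_triangle S hSsymm hSgen _ _ _
        have s1 : wdist S p u = wdist S u p := wdist_symm S hSsymm hSgen _ _
        have s2 : wdist S u w = wdist S w u := wdist_symm S hSsymm hSgen _ _
        have c1 : (wdist S p h₀ : ℝ) ≤ (wdist S p u : ℝ) + (wdist S u w : ℝ) +
            (wdist S w h₀ : ℝ) := by
          have := t1.trans (Nat.add_le_add_left t2 _)
          have := (Nat.cast_le (α := ℝ)).2 this
          push_cast at this; linarith
        rw [s1, s2] at c1
        linarith [hu_d, hw_d, hh₀d]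
      -- assemble x = h₀⁻¹ * g * h₁
      refine ⟨h₀⁻¹ * g * h₁, ⟨h₀⁻¹, inv_mem hh₀H, h₁, hh₁H, rfl⟩, ?_⟩
      have hsplit : h₀⁻¹ * g * h₁ = (h₀⁻¹ * p) * (m⁻¹ * h₁) := by
        rw [hp_def]; group
      have hb : wlen S (h₀⁻¹ * g * h₁) ≤ wlen S (h₀⁻¹ * p) + wlen S (m⁻¹ * h₁) := by
        rw [hsplit]; exact wlen_mul_le S hSsymm hSgen _ _
      have e1 : wlen S (h₀⁻¹ * p) = wdist S p h₀ := by
        rw [wdist_symm S hSsymm hSgen p h₀]; rfl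
      have e2 : wlen S (m⁻¹ * h₁) = wdist S m h₁ := rfl
      have : (wlen S (h₀⁻¹ * g * h₁) : ℝ) ≤ (wdist S p h₀ : ℝ) + (wdist S m h₁ : ℝ) := by
        rw [← e1, ← e2]; exact_mod_cast hb
      linarith [hh₁d]
    · -- w on [h', g*h] : contradiction
      exfalso
      obtain ⟨j, hj, rfl⟩ := hw
      have hd_w_gh : (wdist S (h' * (lg.take j).prod) (g * h) : ℝ) ≤ wlen S g := by
        have e : (h' * (lg.take j).prod)⁻¹ * (g * h) = (lg.take j).prod⁻¹ * lg.prod := by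
          rw [lg_prod, ← hcomm]; group
        have h1 : wdist S (h' * (lg.take j).prod) (g * h) = lg.length - j := by
          unfold wdist; rw [e]; exact (take_prod_wlen S hSsymm hSgen lg_geo hj).2
        have h2 : lg.length - j ≤ wlen S g := by
          rw [← lg_prod, ← lg_geo.2]; omega
        rw [h1]; exact_mod_cast h2
      have t1 : wdist S p (g * h) ≤ wdist S p u + wdist S u (g * h) :=
        wdist_triangle S hSsymm hSgen _ _ _
      have t2 : wdist S u (g * h) ≤ wdist S u (h' * (lg.take j).prod) +
          wdist S (h' * (lg.take j).prod) (g * h) := wdist_triangle S hSsymm hSgen _ _ _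
      have s1 : wdist S p u = wdist S u p := wdist_symm S hSsymm hSgen _ _
      have s2 : wdist S u (h' * (lg.take j).prod) =
          wdist S (h' * (lg.take j).prod) u := wdist_symm S hSsymm hSgen _ _
      have c1 : (wdist S p (g * h) : ℝ) ≤ (wdist S p u : ℝ) +
          (wdist S u (h' * (lg.take j).prod) : ℝ) +
          (wdist S (h' * (lg.take j).prod) (g * h) : ℝ) := by
        have := t1.trans (Nat.add_le_add_left t2 _)
        have := (Nat.cast_le (α := ℝ)).2 this
        push_cast at this; linarith
      rw [s1, s2] at c1
      linarith [hu_d, hw_d]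

end WWAux

namespace WWAux

variable {G : Type*} [Group G]

lemma coset_eq (H : Subgroup G) {g x : G} (hx : ∃ a ∈ H, ∃ b ∈ H, x = a * g * b) :
    {y : G | ∃ a ∈ H, ∃ b ∈ H, y = a * x * b} = {y : G | ∃ a ∈ H, ∃ b ∈ H, y = a * g * b} := by
  obtain ⟨a, haH, b, hbH, rfl⟩ := hx
  ext y
  constructor
  · rintro ⟨a', ha', b', hb', rfl⟩
    exact ⟨a' * a, mul_mem ha' haH, b * b', mul_mem hbH hb', by group⟩
  · rintro ⟨a', ha', b', hb', rfl⟩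
    refine ⟨a' * a⁻¹, mul_mem ha' (inv_mem haH), b⁻¹ * b', mul_mem (inv_mem hbH) hb', ?_⟩
    group

end WWAux

theorem finite_weak_width {G : Type*} [Group G]
    (S : Set G) (hSfin : S.Finite) (hSsymm : ∀ s ∈ S, s⁻¹ ∈ S)
    (hSgen : Subgroup.closure S = ⊤)
    (δ K : ℝ) (hδ : 0 ≤ δ) (hK : 0 ≤ K)
    (hhyp : IsHyperbolic S δ) (H : Subgroup G) (hqc : IsQuasiconvex S H K) :
    {D : Set G | (∃ g : G, D = {y : G | ∃ a ∈ H, ∃ b ∈ H, y = a * g * b}) ∧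
        ∃ x ∈ D, (wlen S x : ℝ) ≤ 2 * K + 2 * δ}.Finite ∧
      ∃ N : ℕ, ∀ (n : ℕ) (g : Fin n → G),
        (∀ i j, i ≠ j →
          {y : G | ∃ a ∈ H, ∃ b ∈ H, y = a * g i * b} ≠
            {y : G | ∃ a ∈ H, ∃ b ∈ H, y = a * g j * b}) →
        (∀ i, ((H : Set G) ∩
          ((fun y => (g i)⁻¹ * y * g i) '' (H : Set G))).Infinite) →
        n ≤ N := by
  classical
  set T : Set (Set G) := {D : Set G |
      (∃ g : G, D = {y : G | ∃ a ∈ H, ∃ b ∈ H, y = a * g * b}) ∧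
        ∃ x ∈ D, (wlen S x : ℝ) ≤ 2 * K + 2 * δ} with hT_def
  have hTfin : T.Finite := by
    set f : Set G → G := fun D =>
      if h : ∃ x ∈ D, (wlen S x : ℝ) ≤ 2 * K + 2 * δ then h.choose else 1 with hf_def
    have hball : {g : G | wlen S g ≤ ⌊2 * K + 2 * δ⌋₊}.Finite :=
      WWAux.ball_finite S hSfin hSsymm hSgen _
    apply Set.Finite.of_finite_image (f := f) _ ?_
    · apply hball.subset
      rintro x ⟨D, hD, rfl⟩
      have hex := hD.2
      have : f D = hex.choose := dif_pos hex
      rw [this]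
      obtain ⟨hmem, hle⟩ := hex.choose_spec
      exact Nat.le_floor hle
    · rintro D₁ hD₁ D₂ hD₂ hfd
      obtain ⟨⟨g₁, rfl⟩, hex₁⟩ := hD₁
      obtain ⟨⟨g₂, rfl⟩, hex₂⟩ := hD₂
      have e₁ : f {y : G | ∃ a ∈ H, ∃ b ∈ H, y = a * g₁ * b} = hex₁.choose := dif_pos hex₁
      have e₂ : f {y : G | ∃ a ∈ H, ∃ b ∈ H, y = a * g₂ * b} = hex₂.choose := dif_pos hex₂
      obtain ⟨hm₁, _⟩ := hex₁.choose_spec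
      obtain ⟨hm₂, _⟩ := hex₂.choose_spec
      have hx : hex₁.choose = hex₂.choose := by rw [← e₁, ← e₂, hfd]
      calc {y : G | ∃ a ∈ H, ∃ b ∈ H, y = a * g₁ * b}
          = {y : G | ∃ a ∈ H, ∃ b ∈ H, y = a * hex₁.choose * b} :=
            (WWAux.coset_eq H hm₁).symm
        _ = {y : G | ∃ a ∈ H, ∃ b ∈ H, y = a * hex₂.choose * b} := by rw [hx]
        _ = {y : G | ∃ a ∈ H, ∃ b ∈ H, y = a * g₂ * b} := WWAux.coset_eq H hm₂
  refine ⟨hTfin, hTfin.toFinset.card, ?_⟩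
  intro n g hdist hinf
  have hmemT : ∀ i : Fin n,
      {y : G | ∃ a ∈ H, ∃ b ∈ H, y = a * g i * b} ∈ hTfin.toFinset := by
    intro i
    rw [Set.Finite.mem_toFinset]
    refine ⟨⟨g i, rfl⟩, ?_⟩
    obtain ⟨x, hx, hxlen⟩ := WWAux.key_lemma S hSfin hSsymm hSgen δ K hδ hK hhyp H hqc
      (g i) (hinf i)
    exact ⟨x, hx, hxlen⟩
  have hinj : Function.Injective
      (fun i : Fin n => (⟨{y : G | ∃ a ∈ H, ∃ b ∈ H, y = a * g i * b}, hmemT i⟩ :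
        hTfin.toFinset)) := by
    intro i j hij
    by_contra hne
    exact hdist i j hne (congrArg Subtype.val hij)
  calc n = Fintype.card (Fin n) := (Fintype.card_fin n).symm
    _ ≤ Fintype.card hTfin.toFinset := Fintype.card_le_of_injective _ hinj
    _ = hTfin.toFinset.card := Fintype.card_coe _
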